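/- For all integers n ≥ 5 and all real x with 0 < x < 1/(n-2), the polynomial f1(x) = -(5n^4 - 18n^3 + 2n^2 + 32)x^2 + (n^3 + 16n^2 - 8n - 64)x + 4(n+2)(n-4) is strictly positive. -/
import Mathlib


theorem f1_pos (n : ℤ) (hn : 5 ≤ n) (x : ℝ) (hx0 : 0 < x) (hx1 : x < 1 / ((n : ℝ) - 2)) :
    0 < -((5 : ℝ) * n ^ 4 - 18 * n ^ 3 + 2 * n ^ 2 + 32) * x ^ 2
        + ((n : ℝ) ^ 3 + 16 * n ^ 2 - 8 * n - 64) * x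
        + 4 * ((n : ℝ) + 2) * ((n : ℝ) - 4) := by
  have hn' : (5 : ℝ) ≤ (n : ℝ) := by exact_mod_cast hn
  have h2 : (0 : ℝ) < (n : ℝ) - 2 := by linarith
  have hx1' : x * ((n : ℝ) - 2) < 1 := by
    have := (lt_div_iff₀ h2).mp hx1
    linarith
  have h1 : 0 < 1 - ((n : ℝ) - 2) * x := by nlinarith
  have hp : (0 : ℝ) < (n : ℝ) := by linarith
  have ha : (0 : ℝ) < 5 * (n : ℝ) ^ 4 - 18 * n ^ 3 + 2 * n ^ 2 + 32 := by
    nlinarith [mul_pos (pow_pos hp 3) (show (0:ℝ) < 5 * (n:ℝ) - 18 by linarith), sq_nonneg (n:ℝ)]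
  have hN : (0 : ℝ) < 8 * (n : ℝ) ^ 3 - 26 * n ^ 2 + 48 * n - 32 := by
    nlinarith [mul_pos (mul_pos hp hp) (show (0:ℝ) < 8 * (n:ℝ) - 26 by linarith)]
  have hc : (0 : ℝ) < 4 * ((n : ℝ) + 2) * ((n : ℝ) - 4) := by nlinarith
  nlinarith [mul_pos (mul_pos ha hx0) h1, mul_pos (mul_pos hN hx0) h2,
    mul_pos hc (mul_pos h1 h2), mul_pos hc h1, mul_pos hx0 h1,
    mul_pos (mul_pos (mul_pos hN hx0) h2) h2, sq_nonneg ((n:ℝ)-2)]
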